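/- Let ω : ℝ² → ℝ be C¹ and let c ∈ ℝ. Assume there exists c' < c such that the superlevel set {x : ω(x) ≥ c'} is compact, and assume c is a regular value: the gradient ∇ω(x) ≠ 0 for every x with ω(x) = c. Then the area function A(t) = (Lebesgue measure of {x ∈ ℝ² : ω(x) ≥ t}), regarded as a real-valued function of t, is differentiable at t = c. -/

import Mathlib

open MeasureTheory
open Set

noncomputable section
def Minv (k d : ℝ) : (ℝ × ℝ) →L[ℝ] (ℝ × ℝ) :=
  (ContinuousLinearMap.fst ℝ ℝ ℝ).prod
    (d⁻¹ • ((ContinuousLinearMap.snd ℝ ℝ ℝ) - k • (ContinuousLinearMap.fst ℝ ℝ ℝ)))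

lemma Minv_apply (k d : ℝ) (z : ℝ × ℝ) : Minv k d z = (z.1, d⁻¹ * (z.2 - k * z.1)) := rfl

lemma D_eval (D : (ℝ × ℝ) →L[ℝ] ℝ) (z : ℝ × ℝ) :
    D z = z.1 * D (1, 0) + z.2 * D (0, 1) := by
  have hz : z = z.1 • ((1:ℝ), (0:ℝ)) + z.2 • ((0:ℝ), (1:ℝ)) := by
    apply Prod.ext <;> simp
  nth_rewrite 1 [hz]
  rw [map_add, ContinuousLinearMap.map_smul, ContinuousLinearMap.map_smul]
  simp [smul_eq_mul]

def Efwd (D : (ℝ × ℝ) →L[ℝ] ℝ) : (ℝ × ℝ) →L[ℝ] (ℝ × ℝ) :=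
  (ContinuousLinearMap.fst ℝ ℝ ℝ).prod D

lemma Efwd_apply (D : (ℝ × ℝ) →L[ℝ] ℝ) (z : ℝ × ℝ) : Efwd D z = (z.1, D z) := rfl

def Eequiv (D : (ℝ × ℝ) →L[ℝ] ℝ) (hd : D (0, 1) ≠ 0) : (ℝ × ℝ) ≃L[ℝ] (ℝ × ℝ) :=
  ContinuousLinearEquiv.equivOfInverse (Efwd D) (Minv (D (1,0)) (D (0,1)))
    (fun z => by
      simp only [Efwd_apply, Minv_apply]
      apply Prod.ext
      · rfl
      · simp only []
        rw [D_eval D z]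
        field_simp
        ring)
    (fun z => by
      simp only [Efwd_apply, Minv_apply]
      apply Prod.ext
      · rfl
      · show D (z.1, (D (0,1))⁻¹ * (z.2 - D (1,0) * z.1)) = z.2
        rw [D_eval D (z.1, (D (0,1))⁻¹ * (z.2 - D (1,0) * z.1))]
        field_simp
        ring)

lemma Eequiv_coe (D : (ℝ × ℝ) →L[ℝ] ℝ) (hd : D (0, 1) ≠ 0) :
    (Eequiv D hd : (ℝ × ℝ) →L[ℝ] (ℝ × ℝ)) = Efwd D := rfl

lemma Eequiv_symm_coe (D : (ℝ × ℝ) →L[ℝ] ℝ) (hd : D (0, 1) ≠ 0) :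
    ((Eequiv D hd).symm : (ℝ × ℝ) →L[ℝ] (ℝ × ℝ)) = Minv (D (1,0)) (D (0,1)) := rfl

lemma det_prod_clm (L : (ℝ × ℝ) →L[ℝ] (ℝ × ℝ))
    (h10 : (L (1,0)).1 = 1) (h01 : (L (0,1)).1 = 0) :
    L.det = (L (0,1)).2 := by
  have hM : LinearMap.toMatrix (Module.Basis.finTwoProd ℝ) (Module.Basis.finTwoProd ℝ)
      (L : (ℝ × ℝ) →ₗ[ℝ] (ℝ × ℝ)) = !![1, 0; (L (1,0)).2, (L (0,1)).2] := by
    ext i j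
    fin_cases i <;> fin_cases j <;>
      simp [LinearMap.toMatrix_apply, Module.Basis.finTwoProd_zero, Module.Basis.finTwoProd_one,
        Module.Basis.coe_finTwoProd_repr, h10, h01]
  rw [ContinuousLinearMap.det, ← LinearMap.det_toMatrix (Module.Basis.finTwoProd ℝ), hM,
    Matrix.det_fin_two_of]
  ring

lemma Minv_det (k d : ℝ) : (Minv k d).det = d⁻¹ := by
  rw [det_prod_clm (Minv k d) rfl rfl]
  show d⁻¹ * ((0,1).2 - k * (0,1).1) = d⁻¹
  simp

/-- bound for a continuous compactly supported function -/
lemma exists_bound_cc {r : (ℝ × ℝ) → ℝ} (hr : Continuous r) (hcs : HasCompactSupport r) :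
    ∃ Mb : ℝ, 0 ≤ Mb ∧ ∀ y, |r y| ≤ Mb := by
  obtain ⟨x0, hx0⟩ := (hr.abs).exists_forall_ge_of_hasCompactSupport (hcs.abs)
  exact ⟨|r x0|, abs_nonneg _, hx0⟩

lemma cont_param_integral {r : (ℝ × ℝ) → ℝ} (hr : Continuous r) (hcs : HasCompactSupport r) :
    Continuous fun v : ℝ => ∫ u : ℝ, r (u, v) := by
  obtain ⟨Mb, hMb0, hMb⟩ := exists_bound_cc hr hcs
  set Q : Set ℝ := Prod.fst '' tsupport r with hQ
  have hQcpt : IsCompact Q := hcs.image continuous_fst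
  have hQmeas : MeasurableSet Q := hQcpt.isClosed.measurableSet
  rw [continuous_iff_continuousAt]
  intro v₀
  apply continuousAt_of_dominated (bound := fun u => Q.indicator (fun _ => Mb) u)
  · filter_upwards with v
    exact (hr.comp (continuous_id.prodMk continuous_const)).aestronglyMeasurable
  · filter_upwards with v
    filter_upwards with u
    by_cases h : r (u, v) = 0
    · rw [Real.norm_eq_abs, h, abs_zero]
      exact Set.indicator_nonneg (fun _ _ => hMb0) u
    · have hu : u ∈ Q := ⟨(u, v), subset_tsupport r h, rfl⟩
      rw [Set.indicator_of_mem hu, Real.norm_eq_abs]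
      exact hMb _
  · exact (integrable_indicator_iff hQmeas).2
      (integrableOn_const hQcpt.measure_lt_top.ne)
  · filter_upwards with u
    exact (hr.comp (continuous_const.prodMk continuous_id)).continuousAt

lemma chart_exists_snd (ω : ℝ × ℝ → ℝ) (hω : ContDiff ℝ 1 ω) (p : ℝ × ℝ)
    (hp : fderiv ℝ ω p (0, 1) ≠ 0) :
    ∃ V : Set (ℝ × ℝ), IsOpen V ∧ p ∈ V ∧
      ∀ ρ : (ℝ × ℝ) → ℝ, Continuous ρ → HasCompactSupport ρ → tsupport ρ ⊆ V →
        ∃ f : ℝ → ℝ, Continuous f ∧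
          ∀ t₁ t₂ : ℝ, ∫ x in ω ⁻¹' Set.Ico t₁ t₂, ρ x = ∫ v in Set.Ico t₁ t₂, f v := by
  classical
  set D := fderiv ℝ ω with hDdef
  have hDcont : Continuous D := hω.continuous_fderiv one_ne_zero
  have hdcont : Continuous fun x => D x (0, 1) := hDcont.clm_apply continuous_const
  set U : Set (ℝ × ℝ) := {x | D x (0, 1) ≠ 0} with hUdef
  have hUopen : IsOpen U := isOpen_compl_singleton.preimage hdcont
  set G : (ℝ × ℝ) → (ℝ × ℝ) := fun x => (x.1, ω x) with hGdef
  have hGsmooth : ContDiff ℝ 1 G := contDiff_fst.prodMk hω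
  have hGF : ∀ x, HasFDerivAt G (Efwd (D x)) x := fun x =>
    HasFDerivAt.prodMk (hasFDerivAt_fst) ((hω.differentiable one_ne_zero x).hasFDerivAt)
  have hGE : ∀ x (hx : x ∈ U), HasFDerivAt G ((Eequiv (D x) hx : (ℝ × ℝ) ≃L[ℝ] (ℝ × ℝ)) :
      (ℝ × ℝ) →L[ℝ] (ℝ × ℝ)) x := fun x hx => by
    rw [Eequiv_coe]; exact hGF x
  set e0 := hGsmooth.contDiffAt.toOpenPartialHomeomorph G (hGE p hp) one_ne_zero with he0
  have he0coe : ⇑e0 = G := ContDiffAt.toOpenPartialHomeomorph_coe _ _ _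
  set e := e0.restrOpen U hUopen with he
  have hecoe : ⇑e = G := he0coe
  have hesrc : e.source = e0.source ∩ U := e0.restrOpen_source U hUopen
  have hpV : p ∈ e.source := by
    rw [hesrc]
    exact ⟨ContDiffAt.mem_toOpenPartialHomeomorph_source _ _ _, hp⟩
  have hsymmU : ∀ y ∈ e.target, D (e.symm y) (0, 1) ≠ 0 := fun y hy =>
    (hesrc ▸ e.map_target hy).2
  -- second coordinate of target points
  have hω_symm : ∀ y ∈ e.target, ω (e.symm y) = y.2 := by
    intro y hy
    have := e.right_inv hy
    rw [hecoe] at this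
    exact congrArg Prod.snd this
  refine ⟨e.source, e.open_source, hpV, ?_⟩
  intro ρ hρc hρcs hρsupp
  -- the pushed-forward density
  set r : (ℝ × ℝ) → ℝ := fun y =>
    if y ∈ e.target then |D (e.symm y) (0, 1)|⁻¹ * ρ (e.symm y) else 0 with hrdef
  set C := tsupport ρ with hC
  have hCV : C ⊆ e.source := hρsupp
  set K' := G '' C with hK'
  have hK'cpt : IsCompact K' := hρcs.image hGsmooth.continuous
  have hK'target : K' ⊆ e.target := by
    rintro _ ⟨x, hx, rfl⟩
    rw [← hecoe]; exact e.map_source (hCV hx)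
  have hr_zero : ∀ y ∉ K', r y = 0 := by
    intro y hy
    rw [hrdef]
    by_cases hyt : y ∈ e.target
    · simp only [if_pos hyt]
      have : ρ (e.symm y) = 0 := by
        by_contra h
        exact hy ⟨e.symm y, subset_tsupport ρ h, by rw [← hecoe]; exact e.right_inv hyt⟩
      rw [this, mul_zero]
    · simp [if_neg hyt]
  have hr_cont : Continuous r := by
    rw [continuous_iff_continuousAt]
    intro y₀
    by_cases hy₀ : y₀ ∈ e.target
    · have hcOn : ContinuousOn (fun y => |D (e.symm y) (0, 1)|⁻¹ * ρ (e.symm y)) e.target := by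
        have hsymm : ContinuousOn e.symm e.target := e.continuousOn_symm
        apply ContinuousOn.mul
        · apply ContinuousOn.inv₀
          · exact ((hdcont.abs).comp_continuousOn hsymm)
          · intro y hy
            simpa using hsymmU y hy
        · exact hρc.comp_continuousOn hsymm
      have : ContinuousAt (fun y => |D (e.symm y) (0, 1)|⁻¹ * ρ (e.symm y)) y₀ :=
        hcOn.continuousAt (e.open_target.mem_nhds hy₀)
      apply this.congr
      filter_upwards [e.open_target.mem_nhds hy₀] with y hy
      rw [hrdef]; simp [if_pos hy]
    · have hy₀K' : y₀ ∉ K' := fun h => hy₀ (hK'target h)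
      have : ContinuousAt (fun _ : ℝ × ℝ => (0:ℝ)) y₀ := continuousAt_const
      apply this.congr
      filter_upwards [hK'cpt.isClosed.isOpen_compl.mem_nhds hy₀K'] with y hy
      rw [hr_zero y hy]
  have hr_cs : HasCompactSupport r := HasCompactSupport.intro hK'cpt hr_zero
  refine ⟨fun v => ∫ u : ℝ, r (u, v), cont_param_integral hr_cont hr_cs, ?_⟩
  intro t₁ t₂
  set ind : ℝ → ℝ := (Set.Ico t₁ t₂).indicator (fun _ => (1:ℝ)) with hind
  have hIco : MeasurableSet (Set.Ico t₁ t₂) := measurableSet_Ico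
  have hpre : MeasurableSet (ω ⁻¹' Set.Ico t₁ t₂) := hIco.preimage hω.continuous.measurable
  -- Step A : formulate LHS as integral over e.source
  have stepA : ∫ x in ω ⁻¹' Set.Ico t₁ t₂, ρ x = ∫ x in e.source, ind (ω x) * ρ x := by
    rw [← integral_indicator hpre]
    rw [setIntegral_eq_integral_of_forall_compl_eq_zero (fun x hx => ?_)]
    · congr 1 with x
      by_cases hx : ω x ∈ Set.Ico t₁ t₂ <;>
        simp [hind, Set.indicator, hx]
    · have : ρ x = 0 := image_eq_zero_of_notMem_tsupport (fun h => hx (hCV h))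
      simp [hind, this]
  -- Step B : change of variables
  have hf' : ∀ y ∈ e.symm.source, HasFDerivAt e.symm
      (Minv (D (e.symm y) (1,0)) (D (e.symm y) (0,1))) y := by
    intro y hy
    rw [OpenPartialHomeomorph.symm_source] at hy
    have hxU : e.symm y ∈ U := (hesrc ▸ e.map_target hy).2
    have hder : HasFDerivAt (⇑e) ((Eequiv (D (e.symm y)) hxU : (ℝ × ℝ) ≃L[ℝ] (ℝ × ℝ)) :
        (ℝ × ℝ) →L[ℝ] (ℝ × ℝ)) (e.symm y) := by
      rw [hecoe]; exact hGE _ hxU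
    have := e.hasFDerivAt_symm hy hder
    rwa [Eequiv_symm_coe] at this
  have stepB := integral_target_eq_integral_abs_det_fderiv_smul (μ := volume)
    (f := e.symm) hf' (fun x => ind (ω x) * ρ x)
  -- Step C : rewrite integrand on the target
  have stepC : ∫ x in e.target,
      |(Minv ((D (e.symm x)) (1, 0)) ((D (e.symm x)) (0, 1))).det| •
        (ind (ω (e.symm x)) * ρ (e.symm x))
      = ∫ y in e.target, ind y.2 * r y := by
    apply setIntegral_congr_fun e.open_target.measurableSet
    intro y hy
    dsimp only
    rw [Minv_det, hω_symm y hy, hrdef]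
    simp only [if_pos hy, smul_eq_mul, abs_inv]
    ring
  -- Step D : extend to all of ℝ²
  have stepD : ∫ y in e.target, ind y.2 * r y = ∫ y : ℝ × ℝ, ind y.2 * r y := by
    apply setIntegral_eq_integral_of_forall_compl_eq_zero
    intro y hy
    rw [hrdef]
    simp [if_neg hy]
  -- Step E : Fubini
  have hr_int : Integrable r := hr_cont.integrable_of_hasCompactSupport hr_cs
  have hind_meas : AEStronglyMeasurable (fun y : ℝ × ℝ => ind y.2) volume :=
    ((measurable_const.indicator hIco).comp measurable_snd).aestronglyMeasurable
  have hind_le : ∀ y : ℝ × ℝ, ‖ind y.2‖ ≤ 1 := by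
    intro y
    rw [hind, Real.norm_eq_abs]
    by_cases h : y.2 ∈ Set.Ico t₁ t₂ <;> simp [Set.indicator, h]
  have hint : Integrable (fun y : ℝ × ℝ => ind y.2 * r y) volume :=
    hr_int.bdd_mul hind_meas (Filter.Eventually.of_forall hind_le)
  have stepE : ∫ y : ℝ × ℝ, ind y.2 * r y
      = ∫ v : ℝ, ind v * ∫ u : ℝ, r (u, v) := by
    rw [Measure.volume_eq_prod] at hint ⊢
    rw [integral_prod_symm _ hint]
    congr 1 with v
    dsimp only
    exact integral_const_mul _ _
  have stepF : ∫ v : ℝ, ind v * ∫ u : ℝ, r (u, v)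
      = ∫ v in Set.Ico t₁ t₂, ∫ u : ℝ, r (u, v) := by
    rw [← integral_indicator hIco]
    congr 1 with v
    by_cases h : v ∈ Set.Ico t₁ t₂ <;> simp [hind, Set.indicator, h]
  rw [OpenPartialHomeomorph.symm_target, OpenPartialHomeomorph.symm_source] at stepB
  rw [stepA, stepB, stepC, stepD, stepE, stepF]

lemma chart_exists (ω : ℝ × ℝ → ℝ) (hω : ContDiff ℝ 1 ω) (p : ℝ × ℝ)
    (hp : fderiv ℝ ω p ≠ 0) :
    ∃ V : Set (ℝ × ℝ), IsOpen V ∧ p ∈ V ∧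
      ∀ ρ : (ℝ × ℝ) → ℝ, Continuous ρ → HasCompactSupport ρ → tsupport ρ ⊆ V →
        ∃ f : ℝ → ℝ, Continuous f ∧
          ∀ t₁ t₂ : ℝ, ∫ x in ω ⁻¹' Set.Ico t₁ t₂, ρ x = ∫ v in Set.Ico t₁ t₂, f v := by
  by_cases h2 : fderiv ℝ ω p (0, 1) ≠ 0
  · exact chart_exists_snd ω hω p h2
  · push_neg at h2
    have h1 : fderiv ℝ ω p (1, 0) ≠ 0 := by
      intro h1
      apply hp
      apply ContinuousLinearMap.ext
      intro z
      rw [D_eval (fderiv ℝ ω p) z, h1, h2]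
      simp
    -- swap coordinates
    set σ : (ℝ × ℝ) ≃L[ℝ] (ℝ × ℝ) := ContinuousLinearEquiv.prodComm ℝ ℝ ℝ with hσ
    have hσcoe : ∀ z : ℝ × ℝ, σ z = (z.2, z.1) := fun z => rfl
    set ω' : (ℝ × ℝ) → ℝ := ω ∘ σ with hω'def
    have hω' : ContDiff ℝ 1 ω' := hω.comp (σ : (ℝ × ℝ) →L[ℝ] (ℝ × ℝ)).contDiff
    set p' : ℝ × ℝ := (p.2, p.1) with hp'def
    have hσp' : σ p' = p := by rw [hσcoe]
    have hd' : fderiv ℝ ω' p' (0, 1) ≠ 0 := by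
      rw [hω'def, σ.comp_right_fderiv]
      rw [hσp']
      simpa [hσcoe] using h1
    obtain ⟨V', hV'open, hpV', hV'⟩ := chart_exists_snd ω' hω' p' hd'
    refine ⟨Prod.swap ⁻¹' V', hV'open.preimage continuous_swap, hpV', ?_⟩
    intro ρ hρc hρcs hρsupp
    set ρ' : (ℝ × ℝ) → ℝ := ρ ∘ Prod.swap with hρ'def
    have hρ'c : Continuous ρ' := hρc.comp continuous_swap
    have hρ'cs : HasCompactSupport ρ' := hρcs.comp_homeomorph (Homeomorph.prodComm ℝ ℝ)
    have hρ'supp : tsupport ρ' ⊆ V' := by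
      intro x hx
      have : Prod.swap x ∈ tsupport ρ := by
        have h1' : tsupport ρ' ⊆ Prod.swap ⁻¹' tsupport ρ := by
          apply closure_minimal
          · intro y hy
            exact subset_tsupport ρ hy
          · exact (isClosed_tsupport ρ).preimage continuous_swap
        exact h1' hx
      have := hρsupp this
      simpa using this
    obtain ⟨f, hfc, hf⟩ := hV' ρ' hρ'c hρ'cs hρ'supp
    refine ⟨f, hfc, ?_⟩
    intro t₁ t₂
    rw [← hf t₁ t₂]
    -- change of variables by the measure preserving swap
    have mp : MeasurePreserving (Prod.swap : ℝ × ℝ → ℝ × ℝ) volume volume := by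
      rw [Measure.volume_eq_prod]
      exact Measure.measurePreserving_swap
    have emb : MeasurableEmbedding (Prod.swap : ℝ × ℝ → ℝ × ℝ) :=
      MeasurableEquiv.prodComm.measurableEmbedding
    have key := mp.setIntegral_preimage_emb emb ρ (ω ⁻¹' Set.Ico t₁ t₂)
    rw [← key]
    rfl

/-- Differentiability of the area function at a regular value: if `ω : ℝ² → ℝ`
is C¹, some superlevel set `{ω ≥ c'}` with `c' < c` is compact, and `∇ω ≠ 0`
on the level set `{ω = c}`, then `t ↦ vol {x | ω x ≥ t}` is differentiable at
`t = c`. -/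
theorem area_function_differentiable_at_regular_value
    (ω : ℝ × ℝ → ℝ) (hω : ContDiff ℝ 1 ω) (c : ℝ)
    (hcompact : ∃ c' : ℝ, c' < c ∧ IsCompact {x : ℝ × ℝ | c' ≤ ω x})
    (hreg : ∀ x : ℝ × ℝ, ω x = c → fderiv ℝ ω x ≠ 0) :
    DifferentiableAt ℝ (fun t : ℝ => (volume {x : ℝ × ℝ | t ≤ ω x}).toReal) c := by
  classical
  obtain ⟨c', hc'c, hKcpt⟩ := hcompact
  set A : ℝ → ℝ := fun t => (volume {x : ℝ × ℝ | t ≤ ω x}).toReal with hA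
  set K : Set (ℝ × ℝ) := {x | ω x = c} with hKdef
  have hKclosed : IsClosed K := isClosed_eq hω.continuous continuous_const
  have hKsub : K ⊆ {x | c' ≤ ω x} := fun x hx => by
    simp only [Set.mem_setOf_eq] at hx ⊢; rw [hx]; exact hc'c.le
  have hKc : IsCompact K := hKcpt.of_isClosed_subset hKclosed hKsub
  have hcharts : ∀ p : K, ∃ V : Set (ℝ × ℝ), IsOpen V ∧ ↑p ∈ V ∧
      ∀ ρ : (ℝ × ℝ) → ℝ, Continuous ρ → HasCompactSupport ρ → tsupport ρ ⊆ V →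
        ∃ f : ℝ → ℝ, Continuous f ∧
          ∀ t₁ t₂ : ℝ, ∫ x in ω ⁻¹' Set.Ico t₁ t₂, ρ x = ∫ v in Set.Ico t₁ t₂, f v :=
    fun p => chart_exists ω hω p (hreg p p.2)
  choose V hVopen hVmem hVprop using hcharts
  obtain ⟨s, hs⟩ := hKc.elim_finite_subcover V hVopen
    (fun x hx => Set.mem_iUnion.2 ⟨⟨x, hx⟩, hVmem _⟩)
  set O : Set (ℝ × ℝ) := ⋃ p ∈ s, V p with hO
  have hOopen : IsOpen O := isOpen_biUnion fun p _ => hVopen p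
  have hKO : K ⊆ O := hs
  set L : Set (ℝ × ℝ) := {x | c' ≤ ω x} \ O with hL
  have hLcpt : IsCompact L := hKcpt.diff hOopen
  have hcL : c ∉ ω '' L := by
    rintro ⟨x, hxL, hx⟩
    exact hxL.2 (hKO hx)
  have hLclosed : IsClosed (ω '' L) := (hLcpt.image hω.continuous).isClosed
  obtain ⟨ε, hε0, hball⟩ := Metric.isOpen_iff.1 hLclosed.isOpen_compl c hcL
  set δ : ℝ := min (ε / 2) ((c - c') / 2) with hδdef
  have hδ0 : 0 < δ := lt_min (by linarith) (by linarith)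
  have hδε : δ < ε := lt_of_le_of_lt (min_le_left _ _) (by linarith)
  have hc'δ : c' < c - δ := by
    have : δ ≤ (c - c') / 2 := min_le_right _ _
    linarith
  have hIccO : ∀ x : ℝ × ℝ, ω x ∈ Set.Icc (c - δ) (c + δ) → x ∈ O := by
    intro x hx
    by_contra hxO
    have hxL : x ∈ L := ⟨by simp only [Set.mem_setOf_eq]; linarith [hx.1], hxO⟩
    have : ω x ∈ Metric.ball c ε := by
      rw [Metric.mem_ball, Real.dist_eq, abs_sub_lt_iff]
      constructor <;> [linarith [hx.2]; linarith [hx.1]]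
    exact hball this ⟨x, hxL, rfl⟩
  set Kδ : Set (ℝ × ℝ) := ω ⁻¹' Set.Icc (c - δ) (c + δ) with hKδ
  have hKδsub : Kδ ⊆ {x | c' ≤ ω x} := fun x hx => by
    simp only [Set.mem_setOf_eq]; exact le_trans hc'δ.le hx.1
  have hKδcpt : IsCompact Kδ :=
    hKcpt.of_isClosed_subset (isClosed_Icc.preimage hω.continuous) hKδsub
  -- partition of unity
  set n := s.card with hn
  set ι := s.equivFin.symm with hι
  set W : Fin n → Set (ℝ × ℝ) := fun i => V (ι i).1 with hW
  have hWopen : ∀ i, IsOpen (W i) := fun i => hVopen _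
  have hcover : Kδ ⊆ ⋃ i, W i := by
    intro x hx
    have hxO := hIccO x hx
    rw [hO, Set.mem_iUnion₂] at hxO
    obtain ⟨p, hps, hxp⟩ := hxO
    exact Set.mem_iUnion.2 ⟨s.equivFin ⟨p, hps⟩, by
      rw [hW]
      simp only [hι, Equiv.symm_apply_apply]
      exact hxp⟩
  obtain ⟨ρ, hρsupp, hρsum, hρmem, hρcs⟩ :=
    exists_continuous_sum_one_of_isOpen_isCompact hWopen hKδcpt hcover
  have hloc : ∀ i : Fin n, ∃ f : ℝ → ℝ, Continuous f ∧
      ∀ t₁ t₂ : ℝ, ∫ x in ω ⁻¹' Set.Ico t₁ t₂, (ρ i) x = ∫ v in Set.Ico t₁ t₂, f v :=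
    fun i => hVprop (ι i).1 (ρ i) (ρ i).continuous (hρcs i) (hρsupp i)
  choose f hfc hf using hloc
  set F : ℝ → ℝ := fun v => ∑ i, f i v with hF
  have hFc : Continuous F := continuous_finset_sum _ fun i _ => hfc i
  -- key identity
  have key : ∀ t₁ t₂ : ℝ, c - δ ≤ t₁ → t₁ ≤ t₂ → t₂ ≤ c + δ →
      (volume (ω ⁻¹' Set.Ico t₁ t₂)).toReal = ∫ v in Set.Ico t₁ t₂, F v := by
    intro t₁ t₂ h1 h12 h2
    set M : Set (ℝ × ℝ) := ω ⁻¹' Set.Ico t₁ t₂ with hM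
    have hMKδ : M ⊆ Kδ := fun x hx => ⟨le_trans h1 hx.1, le_trans hx.2.le h2⟩
    have hMmeas : MeasurableSet M := measurableSet_Ico.preimage hω.continuous.measurable
    have e1 : (volume M).toReal = ∫ x in M, (1 : ℝ) := by
      rw [setIntegral_const, smul_eq_mul, mul_one]; rfl
    have e2 : ∫ x in M, (1 : ℝ) = ∫ x in M, ∑ i, (ρ i) x := by
      apply setIntegral_congr_fun hMmeas
      intro x hx
      have := hρsum (hMKδ hx)
      simp only [ContinuousMap.coe_sum, Finset.sum_apply, Pi.one_apply] at this
      rw [← this]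
    have e3 : ∫ x in M, ∑ i, (ρ i) x = ∑ i, ∫ x in M, (ρ i) x :=
      integral_finset_sum _ fun i _ =>
        ((ρ i).continuous.integrable_of_hasCompactSupport (hρcs i)).integrableOn
    have e4 : ∀ i, ∫ x in M, (ρ i) x = ∫ v in Set.Ico t₁ t₂, f i v := fun i => hf i t₁ t₂
    have e5 : ∑ i, ∫ v in Set.Ico t₁ t₂, f i v = ∫ v in Set.Ico t₁ t₂, F v := by
      rw [hF]
      rw [← integral_finset_sum _ fun i _ =>
        ((hfc i).integrableOn_Icc).mono_set Set.Ico_subset_Icc_self]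
    rw [e1, e2, e3]
    rw [Finset.sum_congr rfl fun i _ => e4 i, e5]
  -- measure difference
  have hfin : ∀ t : ℝ, c - δ ≤ t → volume {x : ℝ × ℝ | t ≤ ω x} ≠ ⊤ := by
    intro t ht
    refine (lt_of_le_of_lt (measure_mono ?_) hKcpt.measure_lt_top).ne
    intro x hx
    simp only [Set.mem_setOf_eq] at hx ⊢
    linarith
  have hdiff : ∀ t₁ t₂ : ℝ, c - δ ≤ t₁ → t₁ ≤ t₂ →
      A t₁ = A t₂ + (volume (ω ⁻¹' Set.Ico t₁ t₂)).toReal := by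
    intro t₁ t₂ h1 h12
    have hsplit : {x : ℝ × ℝ | t₁ ≤ ω x} = ω ⁻¹' Set.Ico t₁ t₂ ∪ {x | t₂ ≤ ω x} := by
      ext x
      simp only [Set.mem_setOf_eq, Set.mem_union, Set.mem_preimage, Set.mem_Ico]
      constructor
      · intro h
        by_cases h' : ω x < t₂
        · exact Or.inl ⟨h, h'⟩
        · exact Or.inr (not_lt.1 h')
      · rintro (⟨h, _⟩ | h)
        · exact h
        · linarith
    have hdisj : Disjoint (ω ⁻¹' Set.Ico t₁ t₂) {x : ℝ × ℝ | t₂ ≤ ω x} := by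
      rw [Set.disjoint_left]
      intro x hx1 hx2
      simp only [Set.mem_preimage, Set.mem_Ico] at hx1
      simp only [Set.mem_setOf_eq] at hx2
      linarith [hx1.2]
    have hmeas2 : MeasurableSet {x : ℝ × ℝ | t₂ ≤ ω x} :=
      (isClosed_le continuous_const hω.continuous).measurableSet
    have := measure_union (μ := volume) hdisj hmeas2
    rw [hA]
    simp only [hsplit]
    rw [this, ENNReal.toReal_add ?f1 ?f2, add_comm]
    case f1 =>
      refine (lt_of_le_of_lt (measure_mono ?_) hKcpt.measure_lt_top).ne
      intro x hx
      simp only [Set.mem_preimage, Set.mem_Ico] at hx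
      simp only [Set.mem_setOf_eq]
      linarith [hx.1]
    case f2 => exact hfin t₂ (le_trans h1 h12)
  -- the primitive
  set g : ℝ → ℝ := fun t => ∫ v in (c : ℝ)..t, F v with hg
  have hgderiv : HasDerivAt g (F c) c :=
    intervalIntegral.integral_hasDerivAt_right (hFc.intervalIntegrable _ _)
      (hFc.stronglyMeasurableAtFilter _ _) hFc.continuousAt
  have hIcoIoo : ∀ t₁ t₂ : ℝ, t₁ ≤ t₂ → ∫ v in Set.Ico t₁ t₂, F v = ∫ v in t₁..t₂, F v := by
    intro t₁ t₂ h
    rw [intervalIntegral.integral_of_le h, integral_Ioc_eq_integral_Ioo,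
      ← integral_Ico_eq_integral_Ioo]
  have heq : ∀ t ∈ Set.Ioo (c - δ) (c + δ), A t = A c - g t := by
    intro t ht
    by_cases h : c ≤ t
    · have := hdiff c t (by linarith) h
      rw [key c t (by linarith) h ht.2.le, hIcoIoo c t h] at this
      rw [hg]
      linarith [this]
    · push_neg at h
      have := hdiff t c ht.1.le h.le
      rw [key t c ht.1.le h.le (by linarith), hIcoIoo t c h.le] at this
      rw [intervalIntegral.integral_symm] at this
      rw [hg]
      linarith [this]
  have hev : (fun t : ℝ => (volume {x : ℝ × ℝ | t ≤ ω x}).toReal) =ᶠ[nhds c]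
      fun t => A c - g t := by
    filter_upwards [isOpen_Ioo.mem_nhds (show c ∈ Set.Ioo (c - δ) (c + δ) by
      constructor <;> [linarith; linarith])] with t ht
    exact heq t ht
  exact ((hgderiv.const_sub (A c)).congr_of_eventuallyEq hev).differentiableAt

end
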